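/- (Main result: a monotone integer key ordering solves floating point positive-weight SSSP.) Let all edge weights satisfy w u v ≥ δ for a fixed real δ > 0, assume every vertex is reachable from the source s (d(v) < ∞ for all v), and let v_1, …, v_n be a bijective enumeration of V with v_1 = s such that the integer keys are nondecreasing: i < j implies ⌊d(v_i)/δ⌋ ≤ ⌊d(v_j)/δ⌋ (where d(v) is interpreted as the real number it equals, since it is finite, and ⌊·⌋ is the integer floor). Then Dijkstra's label recursion processed in this order is correct: D_j(v_j) = d(v_j) for every j with 1 ≤ j ≤ n, and the final labels satisfy D_{n+1}(v) = d(v) for every v ∈ V. -/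

import Mathlib

open scoped ENNReal

/-- The length of the path `p 0, p 1, …, p k` in a graph on `Fin n` with
edge-weight function `w` (where `w u v = ∞` encodes the absence of an edge). -/
noncomputable def pathCost {n : ℕ} (w : Fin n → Fin n → ℝ≥0∞) (p : ℕ → Fin n) (k : ℕ) : ℝ≥0∞ :=
  ∑ i ∈ Finset.range k, w (p i) (p (i + 1))

/-- The shortest-path distance from `s` to `v`: the infimum over all finite paths
from `s` to `v` of their lengths. -/
noncomputable def spDist {n : ℕ} (w : Fin n → Fin n → ℝ≥0∞) (s v : Fin n) : ℝ≥0∞ :=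
  ⨅ (k : ℕ) (p : ℕ → Fin n) (_ : p 0 = s) (_ : p k = v), pathCost w p k

/-- Dijkstra's label recursion, processed according to the enumeration `e` (0-indexed):
`dijkstraD w s e 0` is the initial labelling (`0` at `s`, `∞` elsewhere), and step `j`
relaxes all edges out of the extracted vertex `e j`.  The paper's `D_j` is
`dijkstraD w s e (j-1)`; the extraction value of `v_j` is `dijkstraD w s e (j-1) (e (j-1))`. -/
noncomputable def dijkstraD {n : ℕ} (w : Fin n → Fin n → ℝ≥0∞) (s : Fin n) (e : Fin n → Fin n) :
    ℕ → Fin n → ℝ≥0∞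
  | 0 => fun u => if u = s then 0 else ⊤
  | j + 1 => fun u =>
      if h : j < n then
        min (dijkstraD w s e j u) (dijkstraD w s e j (e ⟨j, h⟩) + w (e ⟨j, h⟩) u)
      else dijkstraD w s e j u

section aux
variable {n : ℕ} (w : Fin n → Fin n → ℝ≥0∞) (s : Fin n)

lemma spDist_le_pathCost (p : ℕ → Fin n) (k : ℕ) (h0 : p 0 = s) :
    spDist w s (p k) ≤ pathCost w p k :=
  iInf_le_of_le k (iInf_le_of_le p (iInf_le_of_le h0 (iInf_le _ rfl)))

lemma exists_path_lt {v : Fin n} {c : ℝ≥0∞} (h : spDist w s v < c) :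
    ∃ k p, p 0 = s ∧ p k = v ∧ pathCost w p k < c := by
  simp only [spDist, iInf_lt_iff] at h
  obtain ⟨k, p, h0, hk, hc⟩ := h
  exact ⟨k, p, h0, hk, hc⟩

lemma spDist_self : spDist w s s = 0 :=
  le_antisymm (by simpa [pathCost] using spDist_le_pathCost w s (fun _ => s) 0 rfl) (zero_le)

lemma spDist_triangle (x u : Fin n) :
    spDist w s u ≤ spDist w s x + w x u := by
  rcases eq_top_or_lt_top (spDist w s x) with hx | hx
  · simp [hx]
  refine ENNReal.le_of_forall_pos_le_add fun ε hε _ => ?_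
  obtain ⟨k, p, h0, hk, hc⟩ := exists_path_lt w s (c := spDist w s x + ε)
    (ENNReal.lt_add_right hx.ne (by exact_mod_cast hε.ne'))
  set q : ℕ → Fin n := fun i => if i ≤ k then p i else u with hq
  have hq0 : q 0 = s := by simp [hq, h0]
  have hqk : q (k+1) = u := by simp [hq]
  have hcost : pathCost w q (k+1) = pathCost w p k + w x u := by
    rw [pathCost, Finset.sum_range_succ]
    congr 1
    · refine Finset.sum_congr rfl fun i hi => ?_
      rw [Finset.mem_range] at hi
      simp [hq, Nat.le_of_lt hi, Nat.succ_le_of_lt hi]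
    · simp [hq, hk]
  have h1 := spDist_le_pathCost w s q (k+1) hq0
  rw [hqk, hcost] at h1
  calc spDist w s u ≤ pathCost w p k + w x u := h1
    _ ≤ (spDist w s x + ε) + w x u := add_le_add_left hc.le _
    _ = (spDist w s x + w x u) + ε := by ring

variable (e : Fin n → Fin n)

lemma spDist_le_dijkstraD : ∀ j u, spDist w s u ≤ dijkstraD w s e j u := by
  intro j
  induction j with
  | zero =>
    intro u
    by_cases h : u = s <;> simp [dijkstraD, h, spDist_self w s]
  | succ j ih =>
    intro u
    by_cases h : j < n
    · simp only [dijkstraD, dif_pos h]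
      refine le_min (ih u) ?_
      calc spDist w s u ≤ spDist w s (e ⟨j, h⟩) + w (e ⟨j, h⟩) u := spDist_triangle w s _ _
        _ ≤ _ := add_le_add_left (ih _) _
    · simp only [dijkstraD, dif_neg h]
      exact ih u

lemma dijkstraD_anti {j j' : ℕ} (h : j ≤ j') (u : Fin n) :
    dijkstraD w s e j' u ≤ dijkstraD w s e j u := by
  induction j', h using Nat.le_induction with
  | base => exact le_refl _
  | succ j' h ih =>
    refine le_trans ?_ ih
    by_cases h' : j' < n
    · simp only [dijkstraD, dif_pos h']
      exact min_le_left _ _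
    · simp only [dijkstraD, dif_neg h']
      exact le_refl _

lemma dijkstraD_step {j : ℕ} (h : j < n) (u : Fin n) :
    dijkstraD w s e (j + 1) u ≤ dijkstraD w s e j (e ⟨j, h⟩) + w (e ⟨j, h⟩) u := by
  simp only [dijkstraD, dif_pos h]
  exact min_le_right _ _

end aux

/-- Main result: if all edge weights are at least `δ > 0`, every vertex is reachable
from `s`, and `e` is a bijective enumeration starting at `s` whose integer keys
`⌊d(v)/δ⌋` are nondecreasing, then Dijkstra's label recursion processed in this
order is correct: every extraction value equals the true distance, and the final
labels equal the shortest-path distances. -/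
theorem dijkstra_correct_of_floor_monotone {n : ℕ} (hn : 0 < n)
    (w : Fin n → Fin n → ℝ≥0∞) (s : Fin n)
    (δ : ℝ) (hδ : 0 < δ) (hw : ∀ u v : Fin n, ENNReal.ofReal δ ≤ w u v)
    (hreach : ∀ v : Fin n, spDist w s v < ⊤)
    (e : Fin n → Fin n) (he : Function.Bijective e) (hes : e ⟨0, hn⟩ = s)
    (hkeys : ∀ i j : Fin n, i < j →
      ⌊(spDist w s (e i)).toReal / δ⌋ ≤ ⌊(spDist w s (e j)).toReal / δ⌋) :
    (∀ j : Fin n, dijkstraD w s e j.val (e j) = spDist w s (e j)) ∧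
      (∀ v : Fin n, dijkstraD w s e n v = spDist w s v) := by
  have hlow := spDist_le_dijkstraD w s e
  have key : ∀ j : ℕ, ∀ hj : j < n,
      dijkstraD w s e j (e ⟨j, hj⟩) = spDist w s (e ⟨j, hj⟩) := by
    intro j
    induction j using Nat.strong_induction_on with
    | _ j IH =>
      intro hj
      refine le_antisymm ?_ (hlow _ _)
      cases j with
      | zero =>
        rw [hes]
        simp [dijkstraD]
      | succ m =>
        set vj := e ⟨m + 1, hj⟩ with hvj
        have hXlt : spDist w s vj < ⊤ := hreach vj
        set x : ℝ := (spDist w s vj).toReal with hxdef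
        set F : ℤ := ⌊x / δ⌋ with hF
        have hεpos : 0 < δ * ((F : ℝ) + 1) - x := by
          have h1 : x / δ < (F : ℝ) + 1 := Int.lt_floor_add_one _
          have h2 := (div_lt_iff₀ hδ).mp h1
          nlinarith
        refine ENNReal.le_of_forall_pos_le_add fun η hη _ => ?_
        set ε' : ℝ := min (δ * ((F : ℝ) + 1) - x) (η : ℝ) with hε'def
        have hε'pos : 0 < ε' := lt_min hεpos (by exact_mod_cast hη)
        have hltc : spDist w s vj < spDist w s vj + ENNReal.ofReal ε' :=
          ENNReal.lt_add_right hXlt.ne (by simp [ENNReal.ofReal_eq_zero]; linarith)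
        obtain ⟨k, p, hp0, hpk, hC⟩ := exists_path_lt w s hltc
        have settled : ∀ m', m' < k → ∃ i, ∃ hi : i < n, i < m + 1 ∧ p m' = e ⟨i, hi⟩ := by
          intro m' hm'
          obtain ⟨i0, hi0⟩ := he.2 (p m')
          refine ⟨i0.val, i0.isLt, ?_, by rw [← hi0]⟩
          by_contra hcon
          push_neg at hcon
          have h2 : spDist w s (p m') + ENNReal.ofReal δ ≤ pathCost w p (m' + 1) := by
            rw [pathCost, Finset.sum_range_succ]
            exact add_le_add (spDist_le_pathCost w s p m' hp0) (hw _ _)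
          have h1 : pathCost w p (m' + 1) ≤ pathCost w p k :=
            Finset.sum_le_sum_of_subset (Finset.range_subset_range.mpr hm')
          have hlt2 : spDist w s (p m') + ENNReal.ofReal δ
              < spDist w s vj + ENNReal.ofReal ε' := lt_of_le_of_lt (h2.trans h1) hC
          have hfin : spDist w s (p m') ≠ ⊤ := (hreach _).ne
          have hreal : (spDist w s (p m')).toReal + δ < x + ε' := by
            have h3 := (ENNReal.toReal_lt_toReal
              (ENNReal.add_ne_top.mpr ⟨hfin, ENNReal.ofReal_ne_top⟩)
              (ENNReal.add_ne_top.mpr ⟨hXlt.ne, ENNReal.ofReal_ne_top⟩)).mpr hlt2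
            rwa [ENNReal.toReal_add hfin ENNReal.ofReal_ne_top,
              ENNReal.toReal_add hXlt.ne ENNReal.ofReal_ne_top,
              ENNReal.toReal_ofReal hδ.le, ENNReal.toReal_ofReal hε'pos.le] at h3
          have hyF : (spDist w s (p m')).toReal < δ * (F : ℝ) := by
            have hle : ε' ≤ δ * ((F : ℝ) + 1) - x := min_le_left _ _
            nlinarith
          have hfloor : ⌊(spDist w s (p m')).toReal / δ⌋ < F := by
            rw [Int.floor_lt, div_lt_iff₀ hδ]
            nlinarith
          rw [← hi0] at hfloor
          rcases eq_or_lt_of_le hcon with heq | hlt3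
          · have hi0eq : i0 = ⟨m + 1, hj⟩ := Fin.ext heq.symm
            rw [hi0eq] at hfloor
            exact absurd hfloor (by simp [hF, hxdef, hvj])
          · have hk' := hkeys ⟨m + 1, hj⟩ i0 (by rw [Fin.lt_def]; exact hlt3)
            rw [← hvj, ← hxdef, ← hF] at hk'
            omega
        cases k with
        | zero =>
          have : vj = s := by rw [← hpk, hp0]
          rw [← hes] at this
          have := he.1 this
          exact absurd (congrArg Fin.val this) (by simp)
        | succ k' =>
          obtain ⟨i, hi, him, hpe⟩ := settled k' (Nat.lt_succ_self k')
          have hIH := IH i him hi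
          calc dijkstraD w s e (m + 1) vj
              ≤ dijkstraD w s e (i + 1) vj := dijkstraD_anti w s e (by omega) vj
            _ ≤ dijkstraD w s e i (e ⟨i, hi⟩) + w (e ⟨i, hi⟩) vj := dijkstraD_step w s e hi vj
            _ = spDist w s (p k') + w (p k') (p (k' + 1)) := by rw [hIH, ← hpe, hpk]
            _ ≤ pathCost w p k' + w (p k') (p (k' + 1)) :=
                add_le_add_left (spDist_le_pathCost w s p k' hp0) _
            _ = pathCost w p (k' + 1) := by rw [pathCost, pathCost, Finset.sum_range_succ]
            _ ≤ spDist w s vj + ENNReal.ofReal ε' := hC.le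
            _ ≤ spDist w s vj + η := by
                refine add_le_add_right ?_ _
                calc ENNReal.ofReal ε' ≤ ENNReal.ofReal (η : ℝ) :=
                      ENNReal.ofReal_le_ofReal (min_le_right _ _)
                  _ = (η : ℝ≥0∞) := ENNReal.ofReal_coe_nnreal
  refine ⟨fun j => ?_, fun v => ?_⟩
  · have h := key j.val j.isLt
    simpa using h
  · obtain ⟨j, rfl⟩ := he.2 v
    refine le_antisymm ?_ (hlow n (e j))
    have h := key j.val j.isLt
    calc dijkstraD w s e n (e j) ≤ dijkstraD w s e j.val (e j) := by
          have := dijkstraD_anti w s e (j.isLt.le) (e j)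
          exact this
      _ = spDist w s (e j) := by simpa using h
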